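/- Let f : U → X be a G-equivariant closed immersion of k-schemes. Then the induced morphism Fix_G(f) : Fix_G(U) → Fix_G(X) is a closed immersion. -/

import Mathlib

open CategoryTheory CategoryTheory.Limits AlgebraicGeometry

noncomputable section
namespace Paper
universe u
variable (k : CommRingCat.{u})
variable {G X U : Scheme.{u}}

/-- The morphism `(m, pr₂) : G ×ₖ X ⟶ X ×ₖ X`. -/
def actionPair (sG : G ⟶ Spec k) (sX : X ⟶ Spec k) (m : pullback sG sX ⟶ X)
    (hm : m ≫ sX = pullback.snd sG sX ≫ sX) : pullback sG sX ⟶ pullback sX sX :=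
  pullback.lift m (pullback.snd sG sX) hm

/-- The fixed-point scheme `Fix_G(X)`. -/
def Fix (sG : G ⟶ Spec k) (sX : X ⟶ Spec k) (m : pullback sG sX ⟶ X)
    (hm : m ≫ sX = pullback.snd sG sX ≫ sX) : Scheme :=
  pullback (actionPair k sG sX m hm) (pullback.diagonal sX)

/-- The canonical projection `Fix_G(X) ⟶ G ×ₖ X`. -/
def fixToProd (sG : G ⟶ Spec k) (sX : X ⟶ Spec k) (m : pullback sG sX ⟶ X)
    (hm : m ≫ sX = pullback.snd sG sX ≫ sX) :
    Fix k sG sX m hm ⟶ pullback sG sX :=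
  pullback.fst (actionPair k sG sX m hm) (pullback.diagonal sX)

/-- The canonical projection `Fix_G(X) ⟶ X`. -/
def fixToBase (sG : G ⟶ Spec k) (sX : X ⟶ Spec k) (m : pullback sG sX ⟶ X)
    (hm : m ≫ sX = pullback.snd sG sX ≫ sX) :
    Fix k sG sX m hm ⟶ X :=
  pullback.snd (actionPair k sG sX m hm) (pullback.diagonal sX)

/-- `id_G ×ₖ f : G ×ₖ U ⟶ G ×ₖ X`. -/
def prodMap (sG : G ⟶ Spec k) (sU : U ⟶ Spec k) (sX : X ⟶ Spec k)
    (f : U ⟶ X) (hf : f ≫ sX = sU) : pullback sG sU ⟶ pullback sG sX :=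
  pullback.map sG sU sG sX (𝟙 G) f (𝟙 (Spec k)) (by simp) (by simp [hf])

theorem fixMap_w (sG : G ⟶ Spec k) (sU : U ⟶ Spec k) (sX : X ⟶ Spec k)
    (mU : pullback sG sU ⟶ U) (hmU : mU ≫ sU = pullback.snd sG sU ≫ sU)
    (mX : pullback sG sX ⟶ X) (hmX : mX ≫ sX = pullback.snd sG sX ≫ sX)
    (f : U ⟶ X) (hf : f ≫ sX = sU)
    (heq : prodMap k sG sU sX f hf ≫ mX = mU ≫ f) :
    (fixToProd k sG sU mU hmU ≫ prodMap k sG sU sX f hf) ≫ actionPair k sG sX mX hmX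
      = (fixToBase k sG sU mU hmU ≫ f) ≫ pullback.diagonal sX := by
  have h1 : fixToProd k sG sU mU hmU ≫ mU = fixToBase k sG sU mU hmU := by
    have hc : fixToProd k sG sU mU hmU ≫ actionPair k sG sU mU hmU
        = fixToBase k sG sU mU hmU ≫ pullback.diagonal sU := pullback.condition
    have := congrArg (· ≫ pullback.fst sU sU) hc
    simpa [actionPair, Category.assoc, pullback.lift_fst_assoc, pullback.lift_fst] using this
  have h2 : fixToProd k sG sU mU hmU ≫ pullback.snd sG sU = fixToBase k sG sU mU hmU := by
    have hc : fixToProd k sG sU mU hmU ≫ actionPair k sG sU mU hmU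
        = fixToBase k sG sU mU hmU ≫ pullback.diagonal sU := pullback.condition
    have := congrArg (· ≫ pullback.snd sU sU) hc
    simpa [actionPair, Category.assoc, pullback.lift_snd_assoc, pullback.lift_snd] using this
  apply pullback.hom_ext
  · simp only [Category.assoc, actionPair, pullback.lift_fst, pullback.diagonal_fst,
      Category.comp_id]
    rw [heq, ← Category.assoc, h1]
  · simp only [Category.assoc, actionPair, pullback.lift_snd, pullback.diagonal_snd,
      Category.comp_id]
    rw [show prodMap k sG sU sX f hf ≫ pullback.snd sG sX = pullback.snd sG sU ≫ f from by
      simp [prodMap, pullback.map, pullback.lift_snd]]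
    rw [← Category.assoc, h2]

/-- The induced morphism `Fix_G(f) : Fix_G(U) ⟶ Fix_G(X)`. -/
def fixMap (sG : G ⟶ Spec k) (sU : U ⟶ Spec k) (sX : X ⟶ Spec k)
    (mU : pullback sG sU ⟶ U) (hmU : mU ≫ sU = pullback.snd sG sU ≫ sU)
    (mX : pullback sG sX ⟶ X) (hmX : mX ≫ sX = pullback.snd sG sX ≫ sX)
    (f : U ⟶ X) (hf : f ≫ sX = sU)
    (heq : prodMap k sG sU sX f hf ≫ mX = mU ≫ f) :
    Fix k sG sU mU hmU ⟶ Fix k sG sX mX hmX :=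
  pullback.lift (fixToProd k sG sU mU hmU ≫ prodMap k sG sU sX f hf)
    (fixToBase k sG sU mU hmU ≫ f)
    (fixMap_w k sG sU sX mU hmU mX hmX f hf heq)


lemma fixToProd_m (sG : G ⟶ Spec k) (sX : X ⟶ Spec k) (m : pullback sG sX ⟶ X)
    (hm : m ≫ sX = pullback.snd sG sX ≫ sX) :
    fixToProd k sG sX m hm ≫ m = fixToBase k sG sX m hm := by
  have hc : fixToProd k sG sX m hm ≫ actionPair k sG sX m hm
      = fixToBase k sG sX m hm ≫ pullback.diagonal sX := pullback.condition
  have := congrArg (· ≫ pullback.fst sX sX) hc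
  simpa [actionPair, Category.assoc, pullback.lift_fst_assoc, pullback.lift_fst] using this

lemma fixToProd_snd (sG : G ⟶ Spec k) (sX : X ⟶ Spec k) (m : pullback sG sX ⟶ X)
    (hm : m ≫ sX = pullback.snd sG sX ≫ sX) :
    fixToProd k sG sX m hm ≫ pullback.snd sG sX = fixToBase k sG sX m hm := by
  have hc : fixToProd k sG sX m hm ≫ actionPair k sG sX m hm
      = fixToBase k sG sX m hm ≫ pullback.diagonal sX := pullback.condition
  have := congrArg (· ≫ pullback.snd sX sX) hc
  simpa [actionPair, Category.assoc, pullback.lift_snd_assoc, pullback.lift_snd] using this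

/-- If `f : U ⟶ X` is a `G`-equivariant closed immersion of `k`-schemes, then
the induced morphism `Fix_G(f) : Fix_G(U) ⟶ Fix_G(X)` is a closed immersion. -/
theorem statement2 (sG : G ⟶ Spec k) (sU : U ⟶ Spec k) (sX : X ⟶ Spec k)
    (mU : pullback sG sU ⟶ U) (hmU : mU ≫ sU = pullback.snd sG sU ≫ sU)
    (mX : pullback sG sX ⟶ X) (hmX : mX ≫ sX = pullback.snd sG sX ≫ sX)
    (f : U ⟶ X) (hf : f ≫ sX = sU)
    (heq : prodMap k sG sU sX f hf ≫ mX = mU ≫ f)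
    [IsClosedImmersion f] :
    IsClosedImmersion (fixMap k sG sU sX mU hmU mX hmX f hf heq) := by
  -- `prodMap = id_G ×ₖ f` is a closed immersion since `f` is.
  haveI : MorphismProperty.IsStableUnderComposition @IsClosedImmersion.{u} :=
    MorphismProperty.IsMultiplicative.toIsStableUnderComposition
  have hprod : IsClosedImmersion (prodMap k sG sU sX f hf) :=
    MorphismProperty.pullback_map (P := @IsClosedImmersion.{u}) inferInstance ‹_›
      (by simp) hf.symm
  -- the key claim: for any test cone, the first leg equalizes `mU` and `pr₂`.
  have key : ∀ (s : PullbackCone (prodMap k sG sU sX f hf) (fixToProd k sG sX mX hmX)),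
      s.fst ≫ mU = s.fst ≫ pullback.snd sG sU := by
    intro s
    have hmono : Mono f := inferInstance
    rw [← cancel_mono f]
    have e1 : (s.fst ≫ mU) ≫ f = s.snd ≫ fixToBase k sG sX mX hmX := by
      rw [Category.assoc, ← heq, ← Category.assoc, s.condition, Category.assoc,
        fixToProd_m]
    have e2 : (s.fst ≫ pullback.snd sG sU) ≫ f = s.snd ≫ fixToBase k sG sX mX hmX := by
      have h : pullback.snd sG sU ≫ f = prodMap k sG sU sX f hf ≫ pullback.snd sG sX := by
        simp [prodMap, pullback.map, pullback.lift_snd]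
      rw [Category.assoc, h, ← Category.assoc, s.condition, Category.assoc, fixToProd_snd]
    rw [e1, e2]
  -- the commuting square
  have comm : fixToProd k sG sU mU hmU ≫ prodMap k sG sU sX f hf
      = fixMap k sG sU sX mU hmU mX hmX f hf heq ≫ fixToProd k sG sX mX hmX := by
    simp [fixMap, fixToProd, pullback.lift_fst]
    exact (pullback.lift_fst _ _ _).symm
  -- lifts for the pullback cone
  have wcond : ∀ (s : PullbackCone (prodMap k sG sU sX f hf) (fixToProd k sG sX mX hmX)),
      s.fst ≫ actionPair k sG sU mU hmU
        = (s.fst ≫ pullback.snd sG sU) ≫ pullback.diagonal sU := by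
    intro s
    apply pullback.hom_ext
    · simpa [actionPair, Category.assoc, pullback.lift_fst_assoc, pullback.lift_fst] using key s
    · simp [actionPair, Category.assoc, pullback.lift_snd_assoc, pullback.lift_snd]
  have sq : IsPullback (fixToProd k sG sU mU hmU)
      (fixMap k sG sU sX mU hmU mX hmX f hf heq)
      (prodMap k sG sU sX f hf) (fixToProd k sG sX mX hmX) := by
    refine IsPullback.of_isLimit' ⟨comm⟩ ?_
    refine PullbackCone.IsLimit.mk _ (fun s =>
      pullback.lift s.fst (s.fst ≫ pullback.snd sG sU) (wcond s)) ?_ ?_ ?_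
    · intro s
      exact pullback.lift_fst _ _ _
    · intro s
      apply pullback.hom_ext
      · have : fixMap k sG sU sX mU hmU mX hmX f hf heq
            ≫ pullback.fst (actionPair k sG sX mX hmX) (pullback.diagonal sX)
            = fixToProd k sG sU mU hmU ≫ prodMap k sG sU sX f hf := by
          simp [fixMap, pullback.lift_fst]
          exact pullback.lift_fst _ _ _
        exact (Category.assoc _ _ _).trans ((congrArg (_ ≫ ·) this).trans
          ((Category.assoc _ _ _).symm.trans ((congrArg (· ≫ prodMap k sG sU sX f hf)
            (pullback.lift_fst _ _ _)).trans s.condition)))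
      · have : fixMap k sG sU sX mU hmU mX hmX f hf heq
            ≫ pullback.snd (actionPair k sG sX mX hmX) (pullback.diagonal sX)
            = fixToBase k sG sU mU hmU ≫ f := by
          simp [fixMap, fixToBase, pullback.lift_snd]
          exact pullback.lift_snd _ _ _
        have h : pullback.snd sG sU ≫ f = prodMap k sG sU sX f hf ≫ pullback.snd sG sX := by
          simp [prodMap, pullback.map, pullback.lift_snd]
        refine (Category.assoc _ _ _).trans ?_
        refine (congrArg (_ ≫ ·) this).trans ?_
        refine (Category.assoc _ _ _).symm.trans ?_
        refine (congrArg (· ≫ f) (pullback.lift_snd _ _ _)).trans ?_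
        refine (Category.assoc _ _ _).trans ?_
        refine (congrArg (_ ≫ ·) h).trans ?_
        refine (Category.assoc _ _ _).symm.trans ?_
        refine (congrArg (· ≫ pullback.snd sG sX) s.condition).trans ?_
        refine (Category.assoc _ _ _).trans ?_
        exact congrArg (_ ≫ ·) (fixToProd_snd k sG sX mX hmX)
    · intro s m h1 h2
      apply pullback.hom_ext
      · rw [pullback.lift_fst]
        exact h1
      · rw [pullback.lift_snd]
        have hb : pullback.snd (actionPair k sG sU mU hmU) (pullback.diagonal sU)
            = fixToProd k sG sU mU hmU ≫ mU := (fixToProd_m k sG sU mU hmU).symm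
        exact (congrArg (m ≫ ·) hb).trans ((Category.assoc _ _ _).symm.trans
          ((congrArg (· ≫ mU) h1).trans (key s)))
  exact MorphismProperty.of_isPullback (P := @IsClosedImmersion) sq hprod

end Paper
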